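/- Let W be a tame 𝓜-module and n ∈ ℕ. Let W(n) denote the 𝓜-module with the same underlying group but with action restricted along the monoid homomorphism (n + −): 𝓜 → 𝓜 sending f to the map x ↦ x for x ≤ n and x ↦ n + f(x−n) for x > n. If the 𝓜-action on W(n) is trivial, then the 𝓜-action on W is trivial. -/

import Mathlib

/-- The injection monoid `𝓜` of injective self-maps of `ℕ`. -/
def InjM : Submonoid (Function.End ℕ) where
  carrier := {f | Function.Injective f}
  one_mem' := fun _ _ h => h
  mul_mem' := fun hf hg => hf.comp hg

/-- The shift `(n + −) : 𝓜 → 𝓜`, sending `f` to the map fixing the first `n`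
natural numbers and acting by a shifted copy of `f` on the rest
(0-indexed). -/
def shiftInj (n : ℕ) (f : InjM) : InjM :=
  ⟨fun x => if x < n then x else n + f.1 (x - n), by
    intro a b h
    simp only at h
    have hfa := Nat.le_add_right n (f.1 (a - n))
    have hfb := Nat.le_add_right n (f.1 (b - n))
    split_ifs at h with h1 h2 h2
    · exact h
    · omega
    · omega
    · have : f.1 (a - n) = f.1 (b - n) := by omega
      have := f.2 this
      omega⟩

/-- Inclusion of permutations of `ℕ` into the injection monoid. -/
def pInj (σ : Equiv.Perm ℕ) : InjM := ⟨(σ : ℕ → ℕ), σ.injective⟩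

lemma pInj_mul (σ τ : Equiv.Perm ℕ) : pInj (σ * τ) = pInj σ * pInj τ := by
  apply Subtype.ext
  funext x
  rfl

lemma pInj_one : pInj 1 = 1 := rfl

lemma swap_identity1 (a c d : ℕ) (hac : a ≠ c) (had : a ≠ d) (hcd : c ≠ d) :
    Equiv.swap a d * Equiv.swap a c = Equiv.swap a c * Equiv.swap d c := by
  ext x
  simp only [Equiv.Perm.mul_apply, Equiv.swap_apply_def]
  split_ifs <;> omega

lemma swap_identity3 (a b c : ℕ) (hab : a ≠ b) (hac : a ≠ c) (hbc : b ≠ c) :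
    Equiv.swap a b = Equiv.swap a c * Equiv.swap b c * Equiv.swap a c := by
  ext x
  simp only [Equiv.Perm.mul_apply, Equiv.swap_apply_def]
  split_ifs <;> omega

/-- Building a permutation agreeing with `f` on an initial segment, as a
product of transpositions. -/
def buildP (f : ℕ → ℕ) : ℕ → Equiv.Perm ℕ
  | 0 => 1
  | (k+1) => buildP f k * Equiv.swap k ((buildP f k)⁻¹ (f k))

lemma buildP_agree (f : ℕ → ℕ) (hf : Function.Injective f) :
    ∀ k, ∀ i < k, buildP f k i = f i := by
  intro k
  induction k with
  | zero => intro i hi; omega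
  | succ k ih =>
    intro i hi
    show (buildP f k * Equiv.swap k ((buildP f k)⁻¹ (f k))) i = f i
    rw [Equiv.Perm.mul_apply]
    rcases eq_or_lt_of_le (Nat.lt_succ_iff.mp hi) with rfl | hik
    · rw [Equiv.swap_apply_left, ← Equiv.Perm.mul_apply, mul_inv_cancel, Equiv.Perm.one_apply]
    · have hne1 : i ≠ k := by omega
      have hne2 : i ≠ (buildP f k)⁻¹ (f k) := by
        intro h
        have h2 : buildP f k i = f k := by rw [h, ← Equiv.Perm.mul_apply, mul_inv_cancel, Equiv.Perm.one_apply]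
        rw [ih i hik] at h2
        exact hne1 (hf h2)
      rw [Equiv.swap_apply_of_ne_of_ne hne1 hne2, ih i hik]

/-- If the `𝓜`-action on the shifted module `W(n)` (restriction along
`(n + −)`) is trivial and `W` is tame, then the `𝓜`-action on `W` is
trivial. -/
theorem stmt_11 {W : Type*} [AddCommGroup W] [DistribMulAction InjM W]
    (n : ℕ)
    (tame : ∀ w : W, ∃ m : ℕ, ∀ f : InjM, (∀ i < m, f.1 i = i) → f • w = w)
    (htriv : ∀ (f : InjM) (w : W), shiftInj n f • w = w) :
    ∀ (f : InjM) (w : W), f • w = w := by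
  -- Step 1: any injection fixing [0,n) pointwise acts trivially
  have fixtriv : ∀ e : InjM, (∀ i < n, e.1 i = i) → ∀ v : W, e • v = v := by
    intro e he v
    have hge : ∀ x, n ≤ x → n ≤ e.1 x := by
      intro x hx
      by_contra hlt
      push_neg at hlt
      have h1 : e.1 (e.1 x) = e.1 x := he _ hlt
      have h2 := e.2 h1
      omega
    have hinj : Function.Injective (fun x => e.1 (x + n) - n) := by
      intro a b hab
      simp only at hab
      have ha := hge (a + n) (by omega)
      have hb := hge (b + n) (by omega)
      have h3 : e.1 (a + n) = e.1 (b + n) := by omega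
      have h4 := e.2 h3
      omega
    have hEq : shiftInj n ⟨fun x => e.1 (x + n) - n, hinj⟩ = e := by
      apply Subtype.ext
      funext x
      show (if x < n then x else n + (e.1 (x - n + n) - n)) = e.1 x
      split_ifs with h
      · exact (he x h).symm
      · have hx : x - n + n = x := by omega
        rw [hx]
        have := hge x (by omega)
        omega
    rw [← hEq]
    exact htriv _ v
  have mulsmul : ∀ (σ τ : Equiv.Perm ℕ) (v : W),
      pInj σ • pInj τ • v = pInj (σ * τ) • v := by
    intro σ τ v
    rw [pInj_mul, mul_smul]
  -- Step 2a: swaps of two points ≥ n act trivially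
  have striv_high : ∀ a b : ℕ, n ≤ a → n ≤ b → ∀ v : W,
      pInj (Equiv.swap a b) • v = v := by
    intro a b ha hb v
    refine fixtriv _ (fun i hi => ?_) v
    exact Equiv.swap_apply_of_ne_of_ne (by omega) (by omega)
  -- Step 2b: mixed swaps act trivially
  have striv_mixed : ∀ a c : ℕ, n ≤ c → ∀ v : W,
      pInj (Equiv.swap a c) • v = v := by
    intro a c hc v
    rcases eq_or_ne a c with rfl | hac
    · rw [Equiv.swap_self]
      have h : pInj (Equiv.refl ℕ) = 1 := rfl
      rw [h, one_smul]
    · set e := a + c + n + 1 with he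
      have h1 : Equiv.swap a e * Equiv.swap a c = Equiv.swap a c * Equiv.swap e c :=
        swap_identity1 a c e hac (by omega) (by omega)
      have h2 : Equiv.swap a c * Equiv.swap a e = Equiv.swap a e * Equiv.swap c e :=
        swap_identity1 a e c (by omega) hac (by omega)
      have hA : pInj (Equiv.swap a e) • (pInj (Equiv.swap a c) • v)
          = pInj (Equiv.swap a c) • v := by
        rw [mulsmul, h1, ← mulsmul, striv_high e c (by omega) hc]
      have hB : pInj (Equiv.swap a c) • (pInj (Equiv.swap a c) • v) = v := by
        rw [mulsmul, Equiv.swap_mul_self, pInj_one, one_smul]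
      have key : v = pInj (Equiv.swap a c) • v := by
        calc v = pInj (Equiv.swap a c) • (pInj (Equiv.swap a c) • v) := hB.symm
          _ = pInj (Equiv.swap a c) • (pInj (Equiv.swap a e) • (pInj (Equiv.swap a c) • v)) := by
              rw [hA]
          _ = pInj (Equiv.swap a c * Equiv.swap a e) • (pInj (Equiv.swap a c) • v) :=
              mulsmul _ _ _
          _ = pInj (Equiv.swap a e * Equiv.swap c e) • (pInj (Equiv.swap a c) • v) := by
              rw [h2]
          _ = pInj (Equiv.swap a e) • (pInj (Equiv.swap c e) • (pInj (Equiv.swap a c) • v)) :=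
              (mulsmul _ _ _).symm
          _ = pInj (Equiv.swap a e) • (pInj (Equiv.swap a c) • v) := by
              rw [striv_high c e hc (by omega)]
          _ = pInj (Equiv.swap a c) • v := hA
      exact key.symm
  -- Step 2c: all swaps act trivially
  have swaptriv : ∀ a b : ℕ, ∀ v : W, pInj (Equiv.swap a b) • v = v := by
    intro a b v
    rcases le_or_gt n b with hb | hb
    · exact striv_mixed a b hb v
    rcases le_or_gt n a with ha | ha
    · rw [Equiv.swap_comm]; exact striv_mixed b a ha v
    rcases eq_or_ne a b with rfl | hab
    · rw [Equiv.swap_self]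
      have h : pInj (Equiv.refl ℕ) = 1 := rfl
      rw [h, one_smul]
    · have h3 : Equiv.swap a b = Equiv.swap a n * Equiv.swap b n * Equiv.swap a n :=
        swap_identity3 a b n hab (by omega) (by omega)
      rw [h3, pInj_mul, pInj_mul, mul_smul, mul_smul, striv_mixed a n le_rfl v,
        striv_mixed b n le_rfl, striv_mixed a n le_rfl]
  -- Step 3: finish
  intro f w
  have ptriv : ∀ k (v : W), pInj (buildP f.1 k) • v = v := by
    intro k
    induction k with
    | zero =>
      intro v
      show pInj 1 • v = v
      rw [pInj_one, one_smul]
    | succ k ih =>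
      intro v
      show pInj (buildP f.1 k * Equiv.swap k ((buildP f.1 k)⁻¹ (f.1 k))) • v = v
      rw [pInj_mul, mul_smul, swaptriv, ih]
  obtain ⟨m, hm⟩ := tame w
  have hfix : ∀ i < m, (pInj (buildP f.1 m)⁻¹ * f).1 i = i := by
    intro i hi
    show (buildP f.1 m)⁻¹ (f.1 i) = i
    conv_lhs => rw [← buildP_agree f.1 f.2 m i hi]
    exact Equiv.symm_apply_apply _ _
  have h1 : (pInj (buildP f.1 m)⁻¹ * f) • w = w := hm _ hfix
  have h2 : pInj (buildP f.1 m) * pInj (buildP f.1 m)⁻¹ = 1 := by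
    rw [← pInj_mul, mul_inv_cancel, pInj_one]
  calc f • w = (pInj (buildP f.1 m) * (pInj (buildP f.1 m)⁻¹ * f)) • w := by
        rw [← mul_assoc, h2, one_mul]
    _ = pInj (buildP f.1 m) • ((pInj (buildP f.1 m)⁻¹ * f) • w) := mul_smul _ _ _
    _ = pInj (buildP f.1 m) • w := by rw [h1]
    _ = w := ptriv m w
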